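/- For sl_2, the dominant monomials of the product χ_q(W_{k,a})·χ_q(W_{k,aq^2}) are exactly M, M A_{aq^{2k-1}}^{-1}, M A_{aq^{2k-1}}^{-1}A_{aq^{2k-3}}^{-1}, ..., M A_{aq^{2k-1}}^{-1}···A_{aq}^{-1}, where M = m_{k,a} m_{k,aq^2}, and each occurs with coefficient exactly 1. -/

import Mathlib

noncomputable section

/-- Laurent monomials in the variables `Y_b`, `b ∈ ℂˣ`, written additively:
a monomial is its finitely supported exponent function. -/
abbrev Mon : Type := ℂˣ →₀ ℤ

/-- The Laurent polynomial ring `ℤ[Y_b^±]`. -/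
abbrev Rng : Type := AddMonoidAlgebra ℤ Mon

/-- The variable `Y_b` as a monomial. -/
def Y (b : ℂˣ) : Mon := Finsupp.single b 1

/-- A monomial viewed as an element of the Laurent polynomial ring. -/
def X (m : Mon) : Rng := AddMonoidAlgebra.single m 1

/-- The monomial `A_b = Y_{bq⁻¹} Y_{bq}` (sl₂ case). -/
def Amon (q b : ℂˣ) : Mon := Y (b * q⁻¹) + Y (b * q)

/-- The highest weight monomial `m_{k,a} = Y_a Y_{aq²} ⋯ Y_{aq^{2(k-1)}}`. -/
def mka (q : ℂˣ) (k : ℕ) (a : ℂˣ) : Mon := ∑ s ∈ Finset.range k, Y (a * q ^ (2 * s))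

/-- The normalized q-character of the sl₂ Kirillov-Reshetikhin module, given by the
nested formula `1 + A_{aq^{2k-1}}⁻¹(1 + A_{aq^{2k-3}}⁻¹(1 + ⋯ (1 + A_{aq}⁻¹)⋯))`. -/
def Nchi (q : ℂˣ) : ℕ → ℂˣ → Rng
  | 0, _ => 1
  | (k+1), a => 1 + X (-(Amon q (a * q ^ (2 * k + 1)))) * Nchi q k a

/-- The q-character `χ_q(W_{k,a}) = m_{k,a}(1 + A_{aq^{2k-1}}⁻¹(1 + ⋯ (1 + A_{aq}⁻¹)⋯))`. -/
def chiW (q : ℂˣ) (k : ℕ) (a : ℂˣ) : Rng := X (mka q k a) * Nchi q k a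

/-- A monomial `m ≠ 1` is right-negative if for each `a`, at the maximal `q`-power shift
`L` where `m` is supported on `a q^L`, the exponent is negative. -/
def RightNeg (q : ℂˣ) (m : Mon) : Prop :=
  m ≠ 0 ∧ ∀ (a : ℂˣ) (L : ℤ), m (a * q ^ L) ≠ 0 →
    (∀ l : ℤ, L < l → m (a * q ^ l) = 0) → m (a * q ^ L) < 0

/-- A monomial is dominant if all its exponents are nonnegative. -/
def Dominant (m : Mon) : Prop := ∀ b, 0 ≤ m b

namespace KRaux

lemma X_mul (m n : Mon) : X m * X n = X (m + n) := by
  simp [X, AddMonoidAlgebra.single_mul_single]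

lemma X_zero : X (0 : Mon) = 1 := (AddMonoidAlgebra.one_def).symm

lemma X_apply (m n : Mon) : (X m).coeff n = if m = n then 1 else 0 := Finsupp.single_apply

def cc (q a : ℂˣ) (s : ℕ) : ℂˣ := a * q ^ (2 * s)

lemma cc_mul_q2 (q a : ℂˣ) (l : ℕ) : a * q ^ 2 * q ^ (2 * l) = cc q a (l + 1) := by
  rw [cc, mul_assoc, ← pow_add]
  have e : 2 + 2 * l = 2 * (l + 1) := by omega
  rw [e]

lemma Amon_eq (q a : ℂˣ) (l : ℕ) :
    Amon q (a * q ^ (2 * l + 1)) = Y (cc q a l) + Y (cc q a (l + 1)) := by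
  have h1 : a * q ^ (2 * l + 1) * q⁻¹ = cc q a l := by
    rw [cc, pow_succ, ← mul_assoc, mul_inv_cancel_right]
  have h2 : a * q ^ (2 * l + 1) * q = cc q a (l + 1) := by
    rw [cc, mul_assoc, ← pow_succ]
    have e : 2 * l + 1 + 1 = 2 * (l + 1) := by omega
    rw [e]
  rw [Amon, h1, h2]

lemma Amon_eq' (q a : ℂˣ) (l : ℕ) :
    Amon q (a * q ^ 2 * q ^ (2 * l + 1)) = Y (cc q a (l + 1)) + Y (cc q a (l + 2)) := by
  have h : a * q ^ 2 * q ^ (2 * l + 1) = a * q ^ (2 * (l + 1) + 1) := by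
    rw [mul_assoc, ← pow_add]
    have e : 2 + (2 * l + 1) = 2 * (l + 1) + 1 := by omega
    rw [e]
  rw [h, Amon_eq]

end KRaux
namespace KRaux

lemma Nchi_expand (q b : ℂˣ) (k : ℕ) :
    Nchi q k b = ∑ i ∈ Finset.range (k + 1),
      X (-(∑ l ∈ Finset.Ico (k - i) k, Amon q (b * q ^ (2 * l + 1)))) := by
  induction k with
  | zero => simp [Nchi, X_zero]
  | succ k ih =>
    rw [show Nchi q (k+1) b = 1 + X (-(Amon q (b * q ^ (2 * k + 1)))) * Nchi q k b from rfl, ih,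
      Finset.mul_sum]
    conv_rhs => rw [Finset.sum_range_succ']
    rw [add_comm]
    congr 1
    · apply Finset.sum_congr rfl
      intro i hi
      rw [X_mul]
      congr 1
      have h1 : k + 1 - (i + 1) = k - i := by omega
      rw [h1, Finset.sum_Ico_succ_top (by omega : k - i ≤ k)]
      abel
    · simp [X_zero]

lemma chiW_expand (q b : ℂˣ) (k : ℕ) :
    chiW q k b = ∑ i ∈ Finset.range (k + 1),
      X (mka q k b - ∑ l ∈ Finset.Ico (k - i) k, Amon q (b * q ^ (2 * l + 1))) := by
  rw [chiW, Nchi_expand, Finset.mul_sum]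
  apply Finset.sum_congr rfl
  intro i _
  rw [X_mul, sub_eq_add_neg]

def S1 (q a : ℂˣ) (k i : ℕ) : Mon :=
  ∑ l ∈ Finset.Ico (k - i) k, (Y (cc q a l) + Y (cc q a (l + 1)))

def S2 (q a : ℂˣ) (k i : ℕ) : Mon :=
  ∑ l ∈ Finset.Ico (k - i) k, (Y (cc q a (l + 1)) + Y (cc q a (l + 2)))

def PP (q a : ℂˣ) (k i i' : ℕ) : Mon :=
  mka q k a + mka q k (a * q ^ 2) - S1 q a k i - S2 q a k i'

lemma prod_expand (q a : ℂˣ) (k : ℕ) :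
    chiW q k a * chiW q k (a * q ^ 2) =
      ∑ i ∈ Finset.range (k + 1), ∑ i' ∈ Finset.range (k + 1), X (PP q a k i i') := by
  rw [chiW_expand, chiW_expand, Finset.sum_mul_sum]
  apply Finset.sum_congr rfl; intro i _
  apply Finset.sum_congr rfl; intro i' _
  rw [X_mul]
  congr 1
  rw [PP, S1, S2]
  have e1 : ∀ l ∈ Finset.Ico (k - i) k, Amon q (a * q ^ (2 * l + 1))
      = Y (cc q a l) + Y (cc q a (l + 1)) := fun l _ => Amon_eq q a l
  have e2 : ∀ l ∈ Finset.Ico (k - i') k, Amon q (a * q ^ 2 * q ^ (2 * l + 1))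
      = Y (cc q a (l + 1)) + Y (cc q a (l + 2)) := fun l _ => Amon_eq' q a l
  rw [Finset.sum_congr rfl e1, Finset.sum_congr rfl e2]
  abel

end KRaux
namespace KRaux

variable {q : ℂˣ}

lemma q_pow_inj (hq : ∀ n : ℤ, n ≠ 0 → q ^ n ≠ 1) {m n : ℕ} (h : q ^ m = q ^ n) : m = n := by
  by_contra hne
  have h2 : q ^ ((m : ℤ) - (n : ℤ)) = 1 := by
    rw [zpow_sub, zpow_natCast, zpow_natCast, h]; simp
  exact hq _ (by omega) h2

lemma cc_inj (hq : ∀ n : ℤ, n ≠ 0 → q ^ n ≠ 1) {a : ℂˣ} {l s : ℕ} :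
    cc q a l = cc q a s ↔ l = s := by
  constructor
  · intro h
    rw [cc, cc] at h
    have h2 := mul_left_cancel h
    have := q_pow_inj hq h2
    omega
  · intro h; rw [h]

lemma Y_cc_apply (hq : ∀ n : ℤ, n ≠ 0 → q ^ n ≠ 1) (a : ℂˣ) (l s : ℕ) :
    (Y (cc q a l) : Mon) (cc q a s) = if l = s then 1 else 0 := by
  rw [Y, Finsupp.single_apply]
  simp [cc_inj hq]

lemma sum_ind (m n d s : ℕ) :
    (∑ l ∈ Finset.Ico m n, if l + d = s then (1 : ℤ) else 0)
      = if m + d ≤ s ∧ s < n + d then 1 else 0 := by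
  induction n with
  | zero =>
    rw [Finset.Ico_eq_empty (by omega), Finset.sum_empty, if_neg (by omega)]
  | succ n ih =>
    by_cases h : m ≤ n
    · rw [Finset.sum_Ico_succ_top h, ih]
      split_ifs <;> omega
    · rw [Finset.Ico_eq_empty (by omega), Finset.sum_empty, if_neg (by omega)]

lemma sum_Y_apply (hq : ∀ n : ℤ, n ≠ 0 → q ^ n ≠ 1) (a : ℂˣ) (m n d s : ℕ) :
    (∑ l ∈ Finset.Ico m n, (Y (cc q a (l + d)) : Mon)) (cc q a s)
      = if m + d ≤ s ∧ s < n + d then 1 else 0 := by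
  rw [Finsupp.finset_sum_apply,
    Finset.sum_congr rfl (fun l _ => Y_cc_apply hq a (l + d) s), sum_ind]

lemma mka_eq (a : ℂˣ) (k : ℕ) :
    mka q k a = ∑ s ∈ Finset.Ico 0 k, Y (cc q a (s + 0)) := by
  rw [mka, Finset.range_eq_Ico]
  apply Finset.sum_congr rfl
  intro s _
  rw [cc]
  norm_num

lemma mka_eq' (a : ℂˣ) (k : ℕ) :
    mka q k (a * q ^ 2) = ∑ s ∈ Finset.Ico 0 k, Y (cc q a (s + 1)) := by
  rw [mka, Finset.range_eq_Ico]
  apply Finset.sum_congr rfl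
  intro s _
  rw [cc_mul_q2]

lemma S1_eq (a : ℂˣ) (k i : ℕ) :
    S1 q a k i = (∑ l ∈ Finset.Ico (k - i) k, Y (cc q a (l + 0)))
      + ∑ l ∈ Finset.Ico (k - i) k, Y (cc q a (l + 1)) := by
  rw [S1, Finset.sum_add_distrib]
  norm_num

lemma S2_eq (a : ℂˣ) (k i : ℕ) :
    S2 q a k i = (∑ l ∈ Finset.Ico (k - i) k, Y (cc q a (l + 1)))
      + ∑ l ∈ Finset.Ico (k - i) k, Y (cc q a (l + 2)) := by
  rw [S2, Finset.sum_add_distrib]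

lemma PP_apply (hq : ∀ n : ℤ, n ≠ 0 → q ^ n ≠ 1) (a : ℂˣ) (k i i' s : ℕ) :
    PP q a k i i' (cc q a s) =
      ((if 0 ≤ s ∧ s < k then (1 : ℤ) else 0) + (if 1 ≤ s ∧ s < k + 1 then 1 else 0))
      - ((if k - i ≤ s ∧ s < k then 1 else 0)
          + (if k - i + 1 ≤ s ∧ s < k + 1 then 1 else 0))
      - ((if k - i' + 1 ≤ s ∧ s < k + 1 then 1 else 0)
          + (if k - i' + 2 ≤ s ∧ s < k + 2 then 1 else 0)) := by
  rw [PP, mka_eq, mka_eq', S1_eq, S2_eq]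
  rw [Finsupp.sub_apply, Finsupp.sub_apply, Finsupp.add_apply, Finsupp.add_apply,
    Finsupp.add_apply, sum_Y_apply hq, sum_Y_apply hq, sum_Y_apply hq, sum_Y_apply hq,
    sum_Y_apply hq, sum_Y_apply hq]
  norm_num

lemma PP_apply_zero (a : ℂˣ) (k i i' : ℕ) {b : ℂˣ} (hb : ∀ s : ℕ, cc q a s ≠ b) :
    PP q a k i i' b = 0 := by
  have key : ∀ (T : Finset ℕ) (f : ℕ → ℕ), (∑ l ∈ T, (Y (cc q a (f l)) : Mon)) b = 0 := by
    intro T f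
    rw [Finsupp.finset_sum_apply]
    apply Finset.sum_eq_zero
    intro l _
    rw [Y, Finsupp.single_apply, if_neg (hb _)]
  rw [PP, mka_eq, mka_eq', S1_eq, S2_eq]
  rw [Finsupp.sub_apply, Finsupp.sub_apply, Finsupp.add_apply, Finsupp.add_apply,
    Finsupp.add_apply, key _ (· + 0), key _ (· + 1), key _ (· + 0), key _ (· + 1),
    key _ (· + 1), key _ (· + 2)]
  norm_num

end KRaux
namespace KRaux

variable {q : ℂˣ}

lemma Asum (hq : ∀ n : ℤ, n ≠ 0 → q ^ n ≠ 1) (a : ℂˣ) (k : ℕ) :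
    ∀ t ≤ k, (∑ j ∈ Finset.range t, Amon q (a * q ^ (2 * (k : ℤ) - 1 - 2 * (j : ℤ))))
      = S1 q a k t := by
  intro t
  induction t with
  | zero => intro _; simp [S1]
  | succ t ih =>
    intro ht
    have e1 : (q : ℂˣ) ^ (2 * (k : ℤ) - 1 - 2 * (t : ℤ)) = q ^ (2 * (k - (t + 1)) + 1) := by
      rw [show 2 * (k : ℤ) - 1 - 2 * (t : ℤ) = ((2 * (k - (t + 1)) + 1 : ℕ) : ℤ) by omega,
        zpow_natCast]
    rw [Finset.sum_range_succ, ih (by omega), e1, Amon_eq]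
    simp only [S1]
    rw [Finset.sum_eq_sum_Ico_succ_bot (show k - (t + 1) < k by omega),
      show k - (t + 1) + 1 = k - t from by omega]
    abel

lemma stmt_eq (hq : ∀ n : ℤ, n ≠ 0 → q ^ n ≠ 1) (a : ℂˣ) {k t : ℕ} (ht : t ≤ k) :
    mka q k a + mka q k (a * q ^ 2)
      - ∑ j ∈ Finset.range t, Amon q (a * q ^ (2 * (k : ℤ) - 1 - 2 * (j : ℤ)))
      = PP q a k t 0 := by
  have h2 : S2 q a k 0 = 0 := by simp [S2]
  rw [Asum hq a k t ht, PP, h2, sub_zero]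

lemma coeff_eq (q a : ℂˣ) (k : ℕ) (m : Mon) :
    (chiW q k a * chiW q k (a * q ^ 2)).coeff m
      = ∑ i ∈ Finset.range (k + 1), ∑ i' ∈ Finset.range (k + 1),
          (if PP q a k i i' = m then (1 : ℤ) else 0) := by
  rw [prod_expand]
  rw [AddMonoidAlgebra.coeff_sum, Finsupp.finset_sum_apply]
  apply Finset.sum_congr rfl
  intro i _
  rw [AddMonoidAlgebra.coeff_sum, Finsupp.finset_sum_apply]
  apply Finset.sum_congr rfl
  intro i' _
  exact X_apply _ _

set_option maxHeartbeats 1600000 in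
lemma PP_inj (hq : ∀ n : ℤ, n ≠ 0 → q ^ n ≠ 1) (a : ℂˣ) {k i i' t : ℕ} (hk : 1 ≤ k)
    (hi : i ≤ k) (hi' : i' ≤ k) (ht : t ≤ k)
    (h : PP q a k i i' = PP q a k t 0) : i = t ∧ i' = 0 := by
  have e : ∀ s : ℕ, PP q a k i i' (cc q a s) = PP q a k t 0 (cc q a s) := fun s => by rw [h]
  have e1 := e (k + 1)
  rw [PP_apply hq, PP_apply hq] at e1
  have hi'0 : i' = 0 := by split_ifs at e1 <;> omega
  subst hi'0
  refine ⟨?_, rfl⟩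
  rcases le_or_gt i t with h1 | h1
  · have e2 := e (k - t)
    rw [PP_apply hq, PP_apply hq] at e2
    split_ifs at e2 <;> omega
  · have e2 := e (k - i)
    rw [PP_apply hq, PP_apply hq] at e2
    split_ifs at e2 <;> omega

set_option maxHeartbeats 1600000 in
lemma dom_i'_zero (hq : ∀ n : ℤ, n ≠ 0 → q ^ n ≠ 1) (a : ℂˣ) {k i i' : ℕ}
    (hi' : i' ≤ k) (hdom : Dominant (PP q a k i i')) : i' = 0 := by
  have h := hdom (cc q a (k + 1))
  rw [PP_apply hq] at h
  split_ifs at h <;> omega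

set_option maxHeartbeats 1600000 in
lemma dom_PP (hq : ∀ n : ℤ, n ≠ 0 → q ^ n ≠ 1) (a : ℂˣ) {k t : ℕ} (ht : t ≤ k) :
    Dominant (PP q a k t 0) := by
  intro b
  by_cases hb : ∃ s : ℕ, cc q a s = b
  · obtain ⟨s, rfl⟩ := hb
    rw [PP_apply hq]
    split_ifs <;> omega
  · push_neg at hb
    rw [PP_apply_zero a k t 0 hb]

lemma coeff_one (hq : ∀ n : ℤ, n ≠ 0 → q ^ n ≠ 1) (a : ℂˣ) {k t : ℕ} (hk : 1 ≤ k)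
    (ht : t ≤ k) :
    (chiW q k a * chiW q k (a * q ^ 2)).coeff (PP q a k t 0) = 1 := by
  rw [coeff_eq]
  rw [Finset.sum_eq_single_of_mem t (Finset.mem_range.mpr (by omega))]
  · rw [Finset.sum_eq_single_of_mem 0 (Finset.mem_range.mpr (by omega))]
    · rw [if_pos rfl]
    · intro i' hi' hne
      rw [Finset.mem_range] at hi'
      rw [if_neg]
      intro h
      exact hne (PP_inj hq a hk ht (by omega) ht h).2
  · intro i hi hne
    rw [Finset.mem_range] at hi
    apply Finset.sum_eq_zero
    intro i' hi'
    rw [Finset.mem_range] at hi'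
    rw [if_neg]
    intro h
    exact hne (PP_inj hq a hk (by omega) (by omega) ht h).1

end KRaux
theorem kr_sl2_dominant_monomials (q : ℂˣ) (hq : ∀ n : ℤ, n ≠ 0 → q ^ n ≠ 1)
    (k : ℕ) (hk : 1 ≤ k) (a : ℂˣ) :
    (∀ m : Mon,
        (m ∈ (chiW q k a * chiW q k (a * q ^ 2)).coeff.support ∧ Dominant m) ↔
          ∃ t ≤ k, m = mka q k a + mka q k (a * q ^ 2)
            - ∑ j ∈ Finset.range t, Amon q (a * q ^ (2 * (k : ℤ) - 1 - 2 * (j : ℤ)))) ∧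
      ∀ t ≤ k,
        (chiW q k a * chiW q k (a * q ^ 2)).coeff
          (mka q k a + mka q k (a * q ^ 2)
            - ∑ j ∈ Finset.range t, Amon q (a * q ^ (2 * (k : ℤ) - 1 - 2 * (j : ℤ)))) = 1 := by
  constructor
  · intro m
    constructor
    · rintro ⟨hm, hdom⟩
      rw [Finsupp.mem_support_iff, KRaux.coeff_eq] at hm
      obtain ⟨i, hi, h1⟩ := Finset.exists_ne_zero_of_sum_ne_zero hm
      obtain ⟨i', hi', h2⟩ := Finset.exists_ne_zero_of_sum_ne_zero h1
      rw [Finset.mem_range] at hi hi'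
      have hP : KRaux.PP q a k i i' = m := by
        by_contra hne
        rw [if_neg hne] at h2
        exact h2 rfl
      have hdom' : Dominant (KRaux.PP q a k i i') := by rw [hP]; exact hdom
      have hi'0 : i' = 0 := KRaux.dom_i'_zero hq a (by omega) hdom'
      refine ⟨i, by omega, ?_⟩
      rw [KRaux.stmt_eq hq a (show i ≤ k by omega), ← hP, hi'0]
    · rintro ⟨t, ht, rfl⟩
      rw [KRaux.stmt_eq hq a ht]
      exact ⟨Finsupp.mem_support_iff.mpr (by rw [KRaux.coeff_one hq a hk ht]; norm_num),
        KRaux.dom_PP hq a ht⟩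
  · intro t ht
    rw [KRaux.stmt_eq hq a ht]
    exact KRaux.coeff_one hq a hk ht
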